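/- arXiv:math/0409329 — 2 statements merged into one kernel-verified Lean document; each statement's English description precedes it below -/
import Mathlib

section
/- For all natural numbers k < d, the 2×2 Wronskian of P_{k;d} and (x+1)^d satisfies P_{k;d}(x)·d(x+1)^{d−1} − P′_{k;d}(x)·(x+1)^d = d·(d−1 choose k)·x^k·(x+1)^{d−1} in ℂ[x]. -/
open Polynomial

/-- The truncated binomial `P_{k;d}(x) = ∑_{i=0}^{k} (d choose i) x^i` as a complex
polynomial. -/
noncomputable def truncBinom (d k : ℕ) : Polynomial ℂ :=
  ∑ i ∈ Finset.range (k + 1), Polynomial.C (Nat.choose d i : ℂ) * Polynomial.X ^ i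

lemma truncBinom_key (d k : ℕ) (hkd : k < d) :
    Polynomial.C (d : ℂ) * truncBinom d k
      - (Polynomial.X + 1) * (truncBinom d k).derivative
      = Polynomial.C ((d : ℂ) * (Nat.choose (d - 1) k : ℂ)) * Polynomial.X ^ k := by
  induction k with
  | zero =>
      simp [truncBinom]
  | succ k ih =>
      have hk : k < d := Nat.lt_of_succ_lt hkd
      have h1 : ((d : ℂ) * (Nat.choose (d - 1) k : ℂ))
          = ((k : ℂ) + 1) * (Nat.choose d (k + 1) : ℂ) := by
        have h := Nat.add_one_mul_choose_eq (d - 1) k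
        rw [Nat.sub_add_cancel (Nat.one_le_of_lt hkd)] at h
        have h' : (d * Nat.choose (d - 1) k : ℕ)
            = (Nat.choose d (k + 1) * (k + 1) : ℕ) := by
          simpa [Nat.succ_eq_add_one, Nat.sub_add_cancel (Nat.one_le_of_lt hkd)] using h
        have hc := congrArg (Nat.cast : ℕ → ℂ) h'
        push_cast at hc
        linear_combination hc
      have h2 : ((d : ℂ) - ((k : ℂ) + 1)) * (Nat.choose d (k + 1) : ℂ)
          = (d : ℂ) * (Nat.choose (d - 1) (k + 1) : ℂ) := by
        have hn : Nat.choose (d - 1) (k + 1) * d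
            = Nat.choose d (k + 1) * (d - (k + 1)) := by
          have := Nat.choose_mul_succ_eq (d - 1) (k + 1)
          rwa [Nat.sub_add_cancel (Nat.one_le_of_lt hkd)] at this
        have hcast : ((d : ℂ) - ((k : ℂ) + 1)) = ((d - (k + 1) : ℕ) : ℂ) := by
          push_cast [Nat.cast_sub (le_of_lt hkd)]
          ring
        rw [hcast]
        exact_mod_cast (mul_comm (d - (k + 1)) (Nat.choose d (k + 1))).trans
          (hn.symm.trans (mul_comm _ _))
      have hP : truncBinom d (k + 1)
          = truncBinom d k
            + Polynomial.C (Nat.choose d (k + 1) : ℂ) * Polynomial.X ^ (k + 1) := by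
        simp [truncBinom, Finset.sum_range_succ]
      rw [hP]
      have hder : (truncBinom d k
            + Polynomial.C (Nat.choose d (k + 1) : ℂ) * Polynomial.X ^ (k + 1)).derivative
          = (truncBinom d k).derivative
            + Polynomial.C (Nat.choose d (k + 1) : ℂ)
                * (Polynomial.C ((k : ℂ) + 1) * Polynomial.X ^ k) := by
        simp [derivative_X_pow]
      rw [hder]
      have expand : Polynomial.C (d : ℂ) *
            (truncBinom d k + Polynomial.C (Nat.choose d (k + 1) : ℂ) * Polynomial.X ^ (k + 1))
          - (Polynomial.X + 1) * ((truncBinom d k).derivative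
              + Polynomial.C (Nat.choose d (k + 1) : ℂ)
                  * (Polynomial.C ((k : ℂ) + 1) * Polynomial.X ^ k))
          = (Polynomial.C (d : ℂ) * truncBinom d k
              - (Polynomial.X + 1) * (truncBinom d k).derivative)
            + (Polynomial.C ((d : ℂ) - ((k : ℂ) + 1)) * Polynomial.C (Nat.choose d (k + 1) : ℂ))
                * Polynomial.X ^ (k + 1)
            - Polynomial.C (((k : ℂ) + 1) * (Nat.choose d (k + 1) : ℂ)) * Polynomial.X ^ k := by
        simp only [map_sub, map_add, map_mul, map_one]
        ring
      rw [expand, ih hk, ← h1, ← map_mul, h2]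
      ring
  
/-- For `k < d`, the 2×2 Wronskian of `P_{k;d}` and `(x+1)^d` satisfies
`P_{k;d}(x)·d(x+1)^{d−1} − P′_{k;d}(x)·(x+1)^d = d·(d−1 choose k)·x^k·(x+1)^{d−1}`
in `ℂ[x]`. -/
theorem truncBinom_wronskian_identity (k d : ℕ) (hkd : k < d) :
    truncBinom d k * (Polynomial.C (d : ℂ) * (Polynomial.X + 1) ^ (d - 1))
      - (truncBinom d k).derivative * (Polynomial.X + 1) ^ d
      = Polynomial.C ((d : ℂ) * (Nat.choose (d - 1) k : ℂ)) * Polynomial.X ^ k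
          * (Polynomial.X + 1) ^ (d - 1) := by
  have hd : d = (d - 1) + 1 := (Nat.sub_add_cancel (Nat.one_le_of_lt hkd)).symm
  have hpow : (Polynomial.X + 1 : Polynomial ℂ) ^ d
      = (Polynomial.X + 1) ^ (d - 1) * (Polynomial.X + 1) := by
    conv_lhs => rw [hd]
    ring
  rw [hpow]
  have key := truncBinom_key d k hkd
  calc truncBinom d k * (Polynomial.C (d : ℂ) * (Polynomial.X + 1) ^ (d - 1))
        - (truncBinom d k).derivative * ((Polynomial.X + 1) ^ (d - 1) * (Polynomial.X + 1))
      = (Polynomial.C (d : ℂ) * truncBinom d k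
          - (Polynomial.X + 1) * (truncBinom d k).derivative) * (Polynomial.X + 1) ^ (d - 1) := by
        ring
    _ = Polynomial.C ((d : ℂ) * (Nat.choose (d - 1) k : ℂ)) * Polynomial.X ^ k
          * (Polynomial.X + 1) ^ (d - 1) := by rw [key]
end

section
/- Let V be an (N+1)-dimensional ℂ-linear subspace of the space of complex polynomials of degree at most d. Let d_0 < d_1 < … < d_N be the distinct degrees of nonzero elements of V, and for each ξ ∈ ℂ let ρ_0(ξ) < ρ_1(ξ) < … < ρ_N(ξ) be the distinct root multiplicities at ξ of nonzero elements of V. Define |w(ξ;V)| := ρ_0(ξ)+⋯+ρ_N(ξ) − N(N+1)/2 for ξ ∈ ℂ, and |w(∞;V)| := (N+1)d − N(N+1)/2 − (d_0+⋯+d_N). Then |w(ξ;V)| = 0 for all but finitely many ξ ∈ ℂ, and ∑_{ξ∈ℂ} |w(ξ;V)| + |w(∞;V)| = (N+1)(d−N). -/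
open Polynomial Matrix Finset

noncomputable section SLEAux

/-- coefficient at an integer index, `0` if the index is negative. -/
def coeffZ (p : Polynomial ℂ) (z : ℤ) : ℂ := if 0 ≤ z then p.coeff z.toNat else 0

lemma coeffZ_nonneg (p : Polynomial ℂ) {z : ℤ} (h : 0 ≤ z) : coeffZ p z = p.coeff z.toNat :=
  if_pos h

lemma coeffZ_neg (p : Polynomial ℂ) {z : ℤ} (h : z < 0) : coeffZ p z = 0 :=
  if_neg (not_le.2 h)

lemma prodcoeff_low_zero {ι : Type*} {p : ι → Polynomial ℂ} {b : ι → ℤ} (s : Finset ι)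
    (h : ∀ x ∈ s, ∀ k : ℕ, (k : ℤ) < b x → (p x).coeff k = 0) :
    ∀ m : ℕ, (m : ℤ) < ∑ x ∈ s, b x → (∏ x ∈ s, p x).coeff m = 0 := by
  classical
  induction s using Finset.induction_on with
  | empty =>
    intro m hm
    rw [Finset.sum_empty] at hm
    omega
  | @insert a s ha ih =>
    intro m hm
    have h' : ∀ x ∈ s, ∀ k : ℕ, (k : ℤ) < b x → (p x).coeff k = 0 :=
      fun x hx => h x (Finset.mem_insert_of_mem hx)
    rw [Finset.sum_insert ha] at hm
    rw [Finset.prod_insert ha, Polynomial.coeff_mul]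
    apply Finset.sum_eq_zero
    rintro ⟨u, v⟩ hmem
    rw [Finset.HasAntidiagonal.mem_antidiagonal] at hmem
    have hc : (u : ℤ) + v = m := by exact_mod_cast congrArg (Nat.cast : ℕ → ℤ) hmem
    by_cases hu : (u : ℤ) < b a
    · rw [h a (Finset.mem_insert_self a s) u hu, zero_mul]
    · have hv : (v : ℤ) < ∑ x ∈ s, b x := by omega
      rw [ih h' v hv, mul_zero]

lemma prodcoeff_low_eq {ι : Type*} {p : ι → Polynomial ℂ} {b : ι → ℤ} (s : Finset ι)
    (h : ∀ x ∈ s, ∀ k : ℕ, (k : ℤ) < b x → (p x).coeff k = 0) :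
    ∀ m : ℕ, (m : ℤ) = ∑ x ∈ s, b x →
      (∏ x ∈ s, p x).coeff m = ∏ x ∈ s, coeffZ (p x) (b x) := by
  classical
  induction s using Finset.induction_on with
  | empty =>
    intro m hm
    rw [Finset.sum_empty] at hm
    have : m = 0 := by exact_mod_cast hm
    subst this
    simp
  | @insert a s ha ih =>
    intro m hm
    have h' : ∀ x ∈ s, ∀ k : ℕ, (k : ℤ) < b x → (p x).coeff k = 0 :=
      fun x hx => h x (Finset.mem_insert_of_mem hx)
    rw [Finset.sum_insert ha] at hm
    rw [Finset.prod_insert ha, Polynomial.coeff_mul, Finset.prod_insert ha]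
    by_cases hba : 0 ≤ b a
    · by_cases hbs : 0 ≤ ∑ x ∈ s, b x
      · rw [Finset.sum_eq_single ((b a).toNat, (∑ x ∈ s, b x).toNat)]
        · rw [ih h' (∑ x ∈ s, b x).toNat (by omega), coeffZ_nonneg _ hba]
        · rintro ⟨u, v⟩ hmem hne
          rw [Finset.HasAntidiagonal.mem_antidiagonal] at hmem
          have hc : (u : ℤ) + v = m := by exact_mod_cast congrArg (Nat.cast : ℕ → ℤ) hmem
          rcases lt_trichotomy ((u : ℤ)) (b a) with h1 | h1 | h1
          · rw [h a (Finset.mem_insert_self a s) u h1, zero_mul]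
          · exfalso
            apply hne
            have hu : u = (b a).toNat := by omega
            have hv : v = (∑ x ∈ s, b x).toNat := by omega
            simp [hu, hv]
          · have hv : (v : ℤ) < ∑ x ∈ s, b x := by omega
            rw [prodcoeff_low_zero s h' v hv, mul_zero]
        · intro hnot
          exfalso
          apply hnot
          rw [Finset.HasAntidiagonal.mem_antidiagonal]
          omega
      · push_neg at hbs
        obtain ⟨x0, hx0s, hx0⟩ : ∃ x ∈ s, b x < 0 := by
          by_contra hcon
          push_neg at hcon
          exact absurd (Finset.sum_nonneg hcon) (not_le.2 hbs)
        rw [Finset.prod_eq_zero (f := fun x => coeffZ (p x) (b x)) hx0s (coeffZ_neg _ hx0), mul_zero]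
        apply Finset.sum_eq_zero
        rintro ⟨u, v⟩ hmem
        rw [Finset.HasAntidiagonal.mem_antidiagonal] at hmem
        have hc : (u : ℤ) + v = m := by exact_mod_cast congrArg (Nat.cast : ℕ → ℤ) hmem
        have hu : (u : ℤ) < b a := by omega
        rw [h a (Finset.mem_insert_self a s) u hu, zero_mul]
    · push_neg at hba
      rw [coeffZ_neg _ hba, zero_mul]
      apply Finset.sum_eq_zero
      rintro ⟨u, v⟩ hmem
      rw [Finset.HasAntidiagonal.mem_antidiagonal] at hmem
      have hc : (u : ℤ) + v = m := by exact_mod_cast congrArg (Nat.cast : ℕ → ℤ) hmem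
      have hv : (v : ℤ) < ∑ x ∈ s, b x := by omega
      rw [prodcoeff_low_zero s h' v hv, mul_zero]

lemma prodcoeff_high_zero {ι : Type*} {p : ι → Polynomial ℂ} {b : ι → ℤ} (s : Finset ι)
    (h : ∀ x ∈ s, ∀ k : ℕ, b x < (k : ℤ) → (p x).coeff k = 0) :
    ∀ m : ℕ, (∑ x ∈ s, b x) < (m : ℤ) → (∏ x ∈ s, p x).coeff m = 0 := by
  classical
  induction s using Finset.induction_on with
  | empty =>
    intro m hm
    rw [Finset.sum_empty] at hm
    have hm0 : m ≠ 0 := by omega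
    simp [Polynomial.coeff_one, hm0]
  | @insert a s ha ih =>
    intro m hm
    have h' : ∀ x ∈ s, ∀ k : ℕ, b x < (k : ℤ) → (p x).coeff k = 0 :=
      fun x hx => h x (Finset.mem_insert_of_mem hx)
    rw [Finset.sum_insert ha] at hm
    rw [Finset.prod_insert ha, Polynomial.coeff_mul]
    apply Finset.sum_eq_zero
    rintro ⟨u, v⟩ hmem
    rw [Finset.HasAntidiagonal.mem_antidiagonal] at hmem
    have hc : (u : ℤ) + v = m := by exact_mod_cast congrArg (Nat.cast : ℕ → ℤ) hmem
    by_cases hu : b a < (u : ℤ)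
    · rw [h a (Finset.mem_insert_self a s) u hu, zero_mul]
    · have hv : (∑ x ∈ s, b x) < (v : ℤ) := by omega
      rw [ih h' v hv, mul_zero]

lemma prodcoeff_high_eq {ι : Type*} {p : ι → Polynomial ℂ} {b : ι → ℤ} (s : Finset ι)
    (h : ∀ x ∈ s, ∀ k : ℕ, b x < (k : ℤ) → (p x).coeff k = 0) :
    ∀ m : ℕ, (m : ℤ) = ∑ x ∈ s, b x →
      (∏ x ∈ s, p x).coeff m = ∏ x ∈ s, coeffZ (p x) (b x) := by
  classical
  induction s using Finset.induction_on with
  | empty =>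
    intro m hm
    rw [Finset.sum_empty] at hm
    have : m = 0 := by exact_mod_cast hm
    subst this
    simp
  | @insert a s ha ih =>
    intro m hm
    have h' : ∀ x ∈ s, ∀ k : ℕ, b x < (k : ℤ) → (p x).coeff k = 0 :=
      fun x hx => h x (Finset.mem_insert_of_mem hx)
    rw [Finset.sum_insert ha] at hm
    rw [Finset.prod_insert ha, Polynomial.coeff_mul, Finset.prod_insert ha]
    by_cases hba : 0 ≤ b a
    · by_cases hbs : 0 ≤ ∑ x ∈ s, b x
      · rw [Finset.sum_eq_single ((b a).toNat, (∑ x ∈ s, b x).toNat)]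
        · rw [ih h' (∑ x ∈ s, b x).toNat (by omega), coeffZ_nonneg _ hba]
        · rintro ⟨u, v⟩ hmem hne
          rw [Finset.HasAntidiagonal.mem_antidiagonal] at hmem
          have hc : (u : ℤ) + v = m := by exact_mod_cast congrArg (Nat.cast : ℕ → ℤ) hmem
          rcases lt_trichotomy ((u : ℤ)) (b a) with h1 | h1 | h1
          · have hv : (∑ x ∈ s, b x) < (v : ℤ) := by omega
            rw [prodcoeff_high_zero s h' v hv, mul_zero]
          · exfalso
            apply hne
            have hu : u = (b a).toNat := by omega
            have hv : v = (∑ x ∈ s, b x).toNat := by omega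
            simp [hu, hv]
          · rw [h a (Finset.mem_insert_self a s) u h1, zero_mul]
        · intro hnot
          exfalso
          apply hnot
          rw [Finset.HasAntidiagonal.mem_antidiagonal]
          omega
      · push_neg at hbs
        obtain ⟨x0, hx0s, hx0⟩ : ∃ x ∈ s, b x < 0 := by
          by_contra hcon
          push_neg at hcon
          exact absurd (Finset.sum_nonneg hcon) (not_le.2 hbs)
        rw [Finset.prod_eq_zero (f := fun x => coeffZ (p x) (b x)) hx0s (coeffZ_neg _ hx0), mul_zero]
        apply Finset.sum_eq_zero
        rintro ⟨u, v⟩ hmem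
        rw [Finset.HasAntidiagonal.mem_antidiagonal] at hmem
        have hc : (u : ℤ) + v = m := by exact_mod_cast congrArg (Nat.cast : ℕ → ℤ) hmem
        have hv : (∑ x ∈ s, b x) < (v : ℤ) := by omega
        rw [prodcoeff_high_zero s h' v hv, mul_zero]
    · push_neg at hba
      rw [coeffZ_neg _ hba, zero_mul]
      apply Finset.sum_eq_zero
      rintro ⟨u, v⟩ hmem
      rw [Finset.HasAntidiagonal.mem_antidiagonal] at hmem
      have hc : (u : ℤ) + v = m := by exact_mod_cast congrArg (Nat.cast : ℕ → ℤ) hmem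
      have hu : b a < (u : ℤ) := by omega
      rw [h a (Finset.mem_insert_self a s) u hu, zero_mul]

end SLEAux
noncomputable section SLEAux2
open Polynomial Matrix Finset

/-- The Wronskian determinant of a family of `n` polynomials. -/
def wronsk (n : ℕ) (f : Fin n → Polynomial ℂ) : Polynomial ℂ :=
  (Matrix.of fun i j : Fin n => (⇑Polynomial.derivative)^[(j : ℕ)] (f i)).det

lemma coeffZ_iterate_derivative (q : Polynomial ℂ) (A j : ℕ) :
    coeffZ ((⇑Polynomial.derivative)^[j] q) ((A : ℤ) - (j : ℤ))
      = (A.descFactorial j : ℂ) * q.coeff A := by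
  by_cases hj : j ≤ A
  · rw [coeffZ_nonneg _ (by omega)]
    have h1 : ((A : ℤ) - (j : ℤ)).toNat = A - j := by omega
    rw [h1, Polynomial.coeff_iterate_derivative]
    have h2 : A - j + j = A := by omega
    rw [h2, nsmul_eq_mul]
  · rw [coeffZ_neg _ (by omega), Nat.descFactorial_eq_zero_iff_lt.mpr (by omega)]
    simp

lemma coeff_iterate_derivative_eq_zero_low {q : Polynomial ℂ} {A : ℕ}
    (hq : ∀ k, k < A → q.coeff k = 0) (j : ℕ) :
    ∀ k : ℕ, (k : ℤ) < (A : ℤ) - (j : ℤ) → ((⇑Polynomial.derivative)^[j] q).coeff k = 0 := by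
  intro k hk
  rw [Polynomial.coeff_iterate_derivative, hq (k + j) (by omega), smul_zero]

lemma coeff_iterate_derivative_eq_zero_high {q : Polynomial ℂ} {A : ℕ}
    (hq : ∀ k, A < k → q.coeff k = 0) (j : ℕ) :
    ∀ k : ℕ, (A : ℤ) - (j : ℤ) < (k : ℤ) → ((⇑Polynomial.derivative)^[j] q).coeff k = 0 := by
  intro k hk
  rw [Polynomial.coeff_iterate_derivative, hq (k + j) (by omega), smul_zero]

lemma wronsk_coeff_det (n : ℕ) (f : Fin n → Polynomial ℂ) (m : ℕ) :
    (wronsk n f).coeff m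
      = ∑ σ : Equiv.Perm (Fin n),
          ((Equiv.Perm.sign σ : ℤ) : ℂ) *
            (∏ x : Fin n, (⇑Polynomial.derivative)^[(x : ℕ)] (f (σ x))).coeff m := by
  rw [wronsk, Matrix.det_apply', Polynomial.finset_sum_coeff]
  refine Finset.sum_congr rfl fun σ _ => ?_
  rw [show (((Equiv.Perm.sign σ : ℤ)) : Polynomial ℂ) = Polynomial.C ((Equiv.Perm.sign σ : ℤ) : ℂ)
      from (map_intCast (Polynomial.C : ℂ →+* Polynomial ℂ) _).symm,
    Polynomial.coeff_C_mul]
  rfl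

lemma wronsk_sum_b {n : ℕ} (a : Fin n → ℕ) (σ : Equiv.Perm (Fin n)) :
    ∑ x : Fin n, ((a (σ x) : ℤ) - ((x : ℕ) : ℤ))
      = (∑ i : Fin n, (a i : ℤ)) - ∑ j : Fin n, ((j : ℕ) : ℤ) := by
  rw [Finset.sum_sub_distrib]
  congr 1
  exact Equiv.sum_comp σ (fun i => (a i : ℤ))

lemma wronsk_coeff_low {n : ℕ} (f : Fin n → Polynomial ℂ) (a : Fin n → ℕ)
    (ha : ∀ i, ∀ k, k < a i → (f i).coeff k = 0) :
    (∀ m : ℕ, (m : ℤ) < (∑ i : Fin n, (a i : ℤ)) - ∑ j : Fin n, ((j : ℕ) : ℤ) →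
      (wronsk n f).coeff m = 0) ∧
    (∀ m : ℕ, (m : ℤ) = (∑ i : Fin n, (a i : ℤ)) - ∑ j : Fin n, ((j : ℕ) : ℤ) →
      (wronsk n f).coeff m
        = (∏ i : Fin n, (f i).coeff (a i))
            * (Matrix.vandermonde (fun i : Fin n => ((a i : ℕ) : ℂ))).det) := by
  have hb : ∀ (σ : Equiv.Perm (Fin n)) (x : Fin n), ∀ k : ℕ,
      (k : ℤ) < (a (σ x) : ℤ) - ((x : ℕ) : ℤ) →
      ((⇑Polynomial.derivative)^[(x : ℕ)] (f (σ x))).coeff k = 0 :=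
    fun σ x => coeff_iterate_derivative_eq_zero_low (fun k hk => ha (σ x) k hk) _
  constructor
  · intro m hm
    rw [wronsk_coeff_det]
    apply Finset.sum_eq_zero
    intro σ _
    rw [prodcoeff_low_zero Finset.univ (fun x _ => hb σ x) m
      (by rw [wronsk_sum_b a σ]; exact hm), mul_zero]
  · intro m hm
    rw [wronsk_coeff_det]
    have hterm : ∀ σ : Equiv.Perm (Fin n),
        (∏ x : Fin n, (⇑Polynomial.derivative)^[(x : ℕ)] (f (σ x))).coeff m
          = ∏ x : Fin n,
              ((Matrix.of fun i j : Fin n =>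
                (f i).coeff (a i) * ((a i).descFactorial (j : ℕ) : ℂ)) (σ x) x) := by
      intro σ
      rw [prodcoeff_low_eq Finset.univ (fun x _ => hb σ x) m
        (by rw [wronsk_sum_b a σ]; exact hm)]
      refine Finset.prod_congr rfl fun x _ => ?_
      rw [coeffZ_iterate_derivative]
      simp [Matrix.of_apply, mul_comm]
    calc (∑ σ : Equiv.Perm (Fin n), ((Equiv.Perm.sign σ : ℤ) : ℂ) *
            (∏ x : Fin n, (⇑Polynomial.derivative)^[(x : ℕ)] (f (σ x))).coeff m)
        = (Matrix.of fun i j : Fin n =>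
            (f i).coeff (a i) * ((a i).descFactorial (j : ℕ) : ℂ)).det := by
          rw [Matrix.det_apply']
          exact Finset.sum_congr rfl fun σ _ => by rw [hterm σ]
      _ = (∏ i : Fin n, (f i).coeff (a i))
            * (Matrix.of fun i j : Fin n => ((a i).descFactorial (j : ℕ) : ℂ)).det := by
          rw [← Matrix.det_mul_column]
          rfl
      _ = (∏ i : Fin n, (f i).coeff (a i))
            * (Matrix.vandermonde (fun i : Fin n => ((a i : ℕ) : ℂ))).det := by
          congr 1
          rw [Matrix.det_eval_matrixOfPolynomials_eq_det_vandermonde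
            (fun i : Fin n => ((a i : ℕ) : ℂ)) (fun j : Fin n => descPochhammer ℂ (j : ℕ))
            (fun j => descPochhammer_natDegree ℂ (j : ℕ))
            (fun j => monic_descPochhammer ℂ (j : ℕ))]
          congr 1
          ext i j
          rw [Matrix.of_apply, Matrix.of_apply, descPochhammer_eval_eq_descFactorial]

lemma wronsk_coeff_high {n : ℕ} (f : Fin n → Polynomial ℂ) (a : Fin n → ℕ)
    (ha : ∀ i, ∀ k, a i < k → (f i).coeff k = 0) :
    (∀ m : ℕ, (∑ i : Fin n, (a i : ℤ)) - (∑ j : Fin n, ((j : ℕ) : ℤ)) < (m : ℤ) →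
      (wronsk n f).coeff m = 0) ∧
    (∀ m : ℕ, (m : ℤ) = (∑ i : Fin n, (a i : ℤ)) - ∑ j : Fin n, ((j : ℕ) : ℤ) →
      (wronsk n f).coeff m
        = (∏ i : Fin n, (f i).coeff (a i))
            * (Matrix.vandermonde (fun i : Fin n => ((a i : ℕ) : ℂ))).det) := by
  have hb : ∀ (σ : Equiv.Perm (Fin n)) (x : Fin n), ∀ k : ℕ,
      (a (σ x) : ℤ) - ((x : ℕ) : ℤ) < (k : ℤ) →
      ((⇑Polynomial.derivative)^[(x : ℕ)] (f (σ x))).coeff k = 0 :=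
    fun σ x => coeff_iterate_derivative_eq_zero_high (fun k hk => ha (σ x) k hk) _
  constructor
  · intro m hm
    rw [wronsk_coeff_det]
    apply Finset.sum_eq_zero
    intro σ _
    rw [prodcoeff_high_zero Finset.univ (fun x _ => hb σ x) m
      (by rw [wronsk_sum_b a σ]; exact hm), mul_zero]
  · intro m hm
    rw [wronsk_coeff_det]
    have hterm : ∀ σ : Equiv.Perm (Fin n),
        (∏ x : Fin n, (⇑Polynomial.derivative)^[(x : ℕ)] (f (σ x))).coeff m
          = ∏ x : Fin n,
              ((Matrix.of fun i j : Fin n =>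
                (f i).coeff (a i) * ((a i).descFactorial (j : ℕ) : ℂ)) (σ x) x) := by
      intro σ
      rw [prodcoeff_high_eq Finset.univ (fun x _ => hb σ x) m
        (by rw [wronsk_sum_b a σ]; exact hm)]
      refine Finset.prod_congr rfl fun x _ => ?_
      rw [coeffZ_iterate_derivative]
      simp [Matrix.of_apply, mul_comm]
    calc (∑ σ : Equiv.Perm (Fin n), ((Equiv.Perm.sign σ : ℤ) : ℂ) *
            (∏ x : Fin n, (⇑Polynomial.derivative)^[(x : ℕ)] (f (σ x))).coeff m)
        = (Matrix.of fun i j : Fin n =>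
            (f i).coeff (a i) * ((a i).descFactorial (j : ℕ) : ℂ)).det := by
          rw [Matrix.det_apply']
          exact Finset.sum_congr rfl fun σ _ => by rw [hterm σ]
      _ = (∏ i : Fin n, (f i).coeff (a i))
            * (Matrix.of fun i j : Fin n => ((a i).descFactorial (j : ℕ) : ℂ)).det := by
          rw [← Matrix.det_mul_column]
          rfl
      _ = (∏ i : Fin n, (f i).coeff (a i))
            * (Matrix.vandermonde (fun i : Fin n => ((a i : ℕ) : ℂ))).det := by
          congr 1
          rw [Matrix.det_eval_matrixOfPolynomials_eq_det_vandermonde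
            (fun i : Fin n => ((a i : ℕ) : ℂ)) (fun j : Fin n => descPochhammer ℂ (j : ℕ))
            (fun j => descPochhammer_natDegree ℂ (j : ℕ))
            (fun j => monic_descPochhammer ℂ (j : ℕ))]
          congr 1
          ext i j
          rw [Matrix.of_apply, Matrix.of_apply, descPochhammer_eval_eq_descFactorial]

end SLEAux2
noncomputable section SLEAux3
open Polynomial Matrix Finset

lemma vandermonde_cast_ne_zero {n : ℕ} {a : Fin n → ℕ} (ha : StrictMono a) :
    (Matrix.vandermonde fun i : Fin n => ((a i : ℕ) : ℂ)).det ≠ 0 := by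
  rw [Matrix.det_vandermonde]
  refine Finset.prod_ne_zero_iff.mpr fun i _ => Finset.prod_ne_zero_iff.mpr fun j hj => ?_
  rw [Finset.mem_Ioi] at hj
  have h1 : a i < a j := ha hj
  rw [sub_ne_zero]
  exact_mod_cast Nat.ne_of_gt h1

lemma strictMono_fin_nat_le {m : ℕ} {f : Fin m → ℕ} (hf : StrictMono f) (i : Fin m) :
    (i : ℕ) ≤ f i := by
  suffices H : ∀ k (hk : k < m), k ≤ f ⟨k, hk⟩ by simpa using H i i.2
  intro k
  induction k with
  | zero => intro hk; exact Nat.zero_le _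
  | succ k ih =>
    intro hk
    have h1 : k < m := by omega
    have h2 := hf (show (⟨k, h1⟩ : Fin m) < ⟨k + 1, hk⟩ by simp [Fin.lt_def])
    have h3 := ih h1
    omega

lemma wronsk_low_main {n : ℕ} (f : Fin n → Polynomial ℂ) (a : Fin n → ℕ)
    (hmono : StrictMono a) (hne : ∀ i, f i ≠ 0)
    (htd : ∀ i, (f i).natTrailingDegree = a i) :
    wronsk n f ≠ 0 ∧
    ((wronsk n f).natTrailingDegree : ℤ)
      = (∑ i : Fin n, (a i : ℤ)) - ∑ j : Fin n, ((j : ℕ) : ℤ) := by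
  have hS : (0 : ℤ) ≤ (∑ i : Fin n, (a i : ℤ)) - ∑ j : Fin n, ((j : ℕ) : ℤ) := by
    rw [sub_nonneg]
    exact Finset.sum_le_sum fun i _ => by exact_mod_cast strictMono_fin_nat_le hmono i
  set S : ℤ := (∑ i : Fin n, (a i : ℤ)) - ∑ j : Fin n, ((j : ℕ) : ℤ) with hSdef
  set m₀ : ℕ := S.toNat with hm₀def
  have hm₀ : (m₀ : ℤ) = S := Int.toNat_of_nonneg hS
  have hlow := wronsk_coeff_low f a (fun i k hk =>
    Polynomial.coeff_eq_zero_of_lt_natTrailingDegree (by rw [htd i]; exact hk))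
  have hcoeff := hlow.2 m₀ hm₀
  have hcne : (wronsk n f).coeff m₀ ≠ 0 := by
    rw [hcoeff]
    apply mul_ne_zero
    · refine Finset.prod_ne_zero_iff.mpr fun i _ => ?_
      have h1 : (f i).trailingCoeff ≠ 0 := fun hz => hne i (Polynomial.trailingCoeff_eq_zero.mp hz)
      rw [← htd i]
      exact h1
    · exact vandermonde_cast_ne_zero hmono
  have hW : wronsk n f ≠ 0 := fun hz => hcne (by simp [hz])
  refine ⟨hW, ?_⟩
  have hle1 : (wronsk n f).natTrailingDegree ≤ m₀ := Polynomial.natTrailingDegree_le_of_ne_zero hcne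
  have hle2 : m₀ ≤ (wronsk n f).natTrailingDegree :=
    Polynomial.le_natTrailingDegree hW (fun k hk => hlow.1 k (by omega))
  have : (wronsk n f).natTrailingDegree = m₀ := le_antisymm hle1 hle2
  rw [this, hm₀]

lemma wronsk_high_main {n : ℕ} (f : Fin n → Polynomial ℂ) (a : Fin n → ℕ)
    (hmono : StrictMono a) (hne : ∀ i, f i ≠ 0)
    (hd : ∀ i, (f i).natDegree = a i) :
    wronsk n f ≠ 0 ∧
    ((wronsk n f).natDegree : ℤ)
      = (∑ i : Fin n, (a i : ℤ)) - ∑ j : Fin n, ((j : ℕ) : ℤ) := by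
  have hS : (0 : ℤ) ≤ (∑ i : Fin n, (a i : ℤ)) - ∑ j : Fin n, ((j : ℕ) : ℤ) := by
    rw [sub_nonneg]
    exact Finset.sum_le_sum fun i _ => by exact_mod_cast strictMono_fin_nat_le hmono i
  set S : ℤ := (∑ i : Fin n, (a i : ℤ)) - ∑ j : Fin n, ((j : ℕ) : ℤ) with hSdef
  set m₀ : ℕ := S.toNat with hm₀def
  have hm₀ : (m₀ : ℤ) = S := Int.toNat_of_nonneg hS
  have hhigh := wronsk_coeff_high f a (fun i k hk =>
    Polynomial.coeff_eq_zero_of_natDegree_lt (by rw [hd i]; exact hk))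
  have hcoeff := hhigh.2 m₀ hm₀
  have hcne : (wronsk n f).coeff m₀ ≠ 0 := by
    rw [hcoeff]
    apply mul_ne_zero
    · refine Finset.prod_ne_zero_iff.mpr fun i _ => ?_
      have h1 : (f i).leadingCoeff ≠ 0 := Polynomial.leadingCoeff_ne_zero.mpr (hne i)
      rw [← hd i]
      exact h1
    · exact vandermonde_cast_ne_zero hmono
  have hW : wronsk n f ≠ 0 := fun hz => hcne (by simp [hz])
  refine ⟨hW, ?_⟩
  have hle1 : m₀ ≤ (wronsk n f).natDegree := Polynomial.le_natDegree_of_ne_zero hcne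
  have hle2 : (wronsk n f).natDegree ≤ m₀ :=
    Polynomial.natDegree_le_iff_coeff_eq_zero.mpr fun k hk => hhigh.1 k (by omega)
  have : (wronsk n f).natDegree = m₀ := le_antisymm hle2 hle1
  rw [this, hm₀]

lemma derivative_taylor' (ξ : ℂ) (p : Polynomial ℂ) :
    Polynomial.derivative (Polynomial.taylor ξ p)
      = Polynomial.taylor ξ (Polynomial.derivative p) := by
  rw [Polynomial.taylor_apply, Polynomial.taylor_apply, Polynomial.derivative_comp]
  simp

/-- `taylor ξ` as a ring homomorphism. -/
def taylorRH (ξ : ℂ) : Polynomial ℂ →+* Polynomial ℂ where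
  toFun := Polynomial.taylor ξ
  map_one' := by simpa using Polynomial.taylor_one ξ
  map_mul' p q := Polynomial.taylor_mul ξ p q
  map_zero' := map_zero _
  map_add' p q := map_add _ p q

lemma iterate_derivative_taylor (ξ : ℂ) (p : Polynomial ℂ) (j : ℕ) :
    (⇑Polynomial.derivative)^[j] (Polynomial.taylor ξ p)
      = Polynomial.taylor ξ ((⇑Polynomial.derivative)^[j] p) := by
  induction j generalizing p with
  | zero => rfl
  | succ k ih =>
    rw [Function.iterate_succ_apply', Function.iterate_succ_apply', ih, derivative_taylor']

lemma wronsk_taylor (ξ : ℂ) {n : ℕ} (f : Fin n → Polynomial ℂ) :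
    wronsk n (fun i => Polynomial.taylor ξ (f i)) = Polynomial.taylor ξ (wronsk n f) := by
  have h1 : Polynomial.taylor ξ (wronsk n f) = taylorRH ξ (wronsk n f) := rfl
  rw [h1, wronsk, wronsk, RingHom.map_det]
  congr 1
  refine Matrix.ext fun i j => ?_
  simp only [RingHom.mapMatrix_apply, Matrix.map_apply, Matrix.of_apply]
  exact iterate_derivative_taylor ξ (f i) (j : ℕ)

lemma iterate_derivative_lincomb {n j : ℕ} (c : Fin n → ℂ) (g : Fin n → Polynomial ℂ) :
    (⇑Polynomial.derivative)^[j] (∑ k, c k • g k)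
      = ∑ k, c k • (⇑Polynomial.derivative)^[j] (g k) := by
  induction j with
  | zero => simp
  | succ k ih =>
    simp only [Function.iterate_succ_apply', ih, map_sum, Polynomial.derivative_smul]

lemma wronsk_basis_change {n : ℕ} (g : Fin n → Polynomial ℂ) (c : Fin n → Fin n → ℂ) :
    wronsk n (fun i => ∑ k, c i k • g k)
      = Polynomial.C ((Matrix.of c).det) * wronsk n g := by
  rw [wronsk, wronsk]
  have hM : (Matrix.of fun i j : Fin n => (⇑Polynomial.derivative)^[(j : ℕ)] (∑ k, c i k • g k))
      = ((Matrix.of c).map (Polynomial.C))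
          * (Matrix.of fun k j : Fin n => (⇑Polynomial.derivative)^[(j : ℕ)] (g k)) := by
    refine Matrix.ext fun i j => ?_
    rw [Matrix.mul_apply]
    simp only [Matrix.of_apply, Matrix.map_apply]
    rw [iterate_derivative_lincomb]
    exact Finset.sum_congr rfl fun k _ => by rw [Polynomial.smul_eq_C_mul]
  rw [hM, Matrix.det_mul,
    show (Matrix.of c).map ⇑Polynomial.C
        = (Polynomial.C : ℂ →+* Polynomial ℂ).mapMatrix (Matrix.of c) from rfl,
    ← RingHom.map_det]

lemma linIndep_of_distinct_natDegree {n : ℕ} {g : Fin n → Polynomial ℂ} {a : Fin n → ℕ}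
    (hne : ∀ i, g i ≠ 0) (hdeg : ∀ i, (g i).natDegree = a i) (ha : StrictMono a) :
    LinearIndependent ℂ g := by
  classical
  rw [Fintype.linearIndependent_iff]
  intro c hc
  by_contra hcon
  push_neg at hcon
  obtain ⟨i1, hi1⟩ := hcon
  set s := Finset.univ.filter (fun i => c i ≠ 0) with hs
  have hsne : s.Nonempty := ⟨i1, by simp [hs, hi1]⟩
  set i0 := s.max' hsne with hi0
  have hi0s : i0 ∈ s := s.max'_mem hsne
  have hci0 : c i0 ≠ 0 := by
    have := hi0s
    rw [hs, Finset.mem_filter] at this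
    exact this.2
  have h0 : (∑ i, c i • g i).coeff (a i0) = 0 := by rw [hc]; simp
  rw [Polynomial.finset_sum_coeff] at h0
  rw [Finset.sum_eq_single_of_mem i0 (Finset.mem_univ i0) ?_] at h0
  · rw [Polynomial.coeff_smul, ← hdeg i0, Polynomial.coeff_natDegree] at h0
    exact Polynomial.leadingCoeff_ne_zero.mpr (hne i0) ((smul_eq_zero.mp h0).resolve_left hci0)
  · intro i _ hne'
    by_cases hci : c i = 0
    · simp [hci]
    · have his : i ∈ s := by rw [hs, Finset.mem_filter]; exact ⟨Finset.mem_univ i, hci⟩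
      have hlt : i < i0 := lt_of_le_of_ne (s.le_max' i his) hne'
      have hdlt : (g i).natDegree < a i0 := by rw [hdeg i]; exact ha hlt
      rw [Polynomial.coeff_smul, Polynomial.coeff_eq_zero_of_natDegree_lt hdlt, smul_zero]

lemma exists_combination {n : ℕ} (hn : 0 < n) (V : Submodule ℂ (Polynomial ℂ))
    (hrank : Module.finrank ℂ V = n) (g : Fin n → Polynomial ℂ)
    (hgV : ∀ i, g i ∈ V) (hli : LinearIndependent ℂ g)
    {h : Polynomial ℂ} (hh : h ∈ V) : ∃ c : Fin n → ℂ, ∑ k, c k • g k = h := by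
  have hFD : FiniteDimensional ℂ V := Module.finite_of_finrank_pos (by omega)
  set g' : Fin n → V := fun i => ⟨g i, hgV i⟩ with hg'
  have hcomp : (V.subtype) ∘ g' = g := rfl
  have hli' : LinearIndependent ℂ g' :=
    LinearIndependent.of_comp V.subtype (by rw [hcomp]; exact hli)
  have hsp := hli'.span_eq_top_of_card_eq_finrank' (by simpa using hrank.symm)
  have hmem : (⟨h, hh⟩ : V) ∈ Submodule.span ℂ (Set.range g') := by rw [hsp]; trivial
  obtain ⟨c, hc⟩ := (Submodule.mem_span_range_iff_exists_fun ℂ).mp hmem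
  refine ⟨c, ?_⟩
  have := congrArg (Subtype.val) hc
  simpa [g'] using this

lemma rootMult_eq_taylor_ntd (ξ : ℂ) (p : Polynomial ℂ) :
    p.rootMultiplicity ξ = (Polynomial.taylor ξ p).natTrailingDegree := by
  rw [Polynomial.rootMultiplicity_eq_natTrailingDegree, Polynomial.taylor_apply]

lemma rootMult_C_mul (ξ e : ℂ) (he : e ≠ 0) (p : Polynomial ℂ) (hp : p ≠ 0) :
    (Polynomial.C e * p).rootMultiplicity ξ = p.rootMultiplicity ξ := by
  rw [Polynomial.rootMultiplicity_mul
      (mul_ne_zero (Polynomial.C_ne_zero.mpr he) hp),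
    Polynomial.rootMultiplicity_C, zero_add]

end SLEAux3
/-- Let `V` be an `(N+1)`-dimensional subspace of the space of complex polynomials of
degree at most `d`, let `d_0 < … < d_N` be the distinct degrees of nonzero elements of
`V`, and for each `ξ ∈ ℂ` let `ρ_0(ξ) < … < ρ_N(ξ)` be the distinct root multiplicities
at `ξ` of nonzero elements of `V`.  With
`|w(ξ;V)| = ρ_0(ξ)+⋯+ρ_N(ξ) − N(N+1)/2` and
`|w(∞;V)| = (N+1)d − N(N+1)/2 − (d_0+⋯+d_N)`, one has `|w(ξ;V)| = 0` for all but
finitely many `ξ` and `∑_{ξ∈ℂ} |w(ξ;V)| + |w(∞;V)| = (N+1)(d−N)`. -/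
theorem sum_local_exponents (N d : ℕ) (V : Submodule ℂ (Polynomial ℂ))
    (hdeg : V ≤ Polynomial.degreeLE ℂ (d : WithBot ℕ))
    (hrank : Module.finrank ℂ V = N + 1)
    (dseq : Fin (N + 1) → ℕ) (hdmono : StrictMono dseq)
    (hdset : {k : ℕ | ∃ g ∈ V, g ≠ 0 ∧ g.natDegree = k} = Set.range dseq)
    (ρ : ℂ → Fin (N + 1) → ℕ) (hρmono : ∀ ξ, StrictMono (ρ ξ))
    (hρset : ∀ ξ : ℂ, {k : ℕ | ∃ g ∈ V, g ≠ 0 ∧ Polynomial.rootMultiplicity ξ g = k}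
      = Set.range (ρ ξ)) :
    {ξ : ℂ | (∑ i, (ρ ξ i : ℤ)) - (N * (N + 1) / 2 : ℕ) ≠ 0}.Finite ∧
    (∑ᶠ ξ : ℂ, ((∑ i, (ρ ξ i : ℤ)) - (N * (N + 1) / 2 : ℕ)))
      + ((N + 1 : ℤ) * d - (N * (N + 1) / 2 : ℕ) - ∑ i, (dseq i : ℤ))
      = (N + 1 : ℤ) * ((d : ℤ) - N) := by
  classical
  -- the triangular number
  have hT2 : (∑ j : Fin (N + 1), ((j : ℕ) : ℤ)) * 2 = ((N : ℤ) + 1) * N := by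
    have h1 := Finset.sum_range_id_mul_two (N + 1)
    have h1' : (∑ i ∈ Finset.range (N + 1), i) * 2 = (N + 1) * N := by simpa using h1
    have h2 : (∑ j : Fin (N + 1), ((j : ℕ) : ℤ))
        = ((∑ i ∈ Finset.range (N + 1), i : ℕ) : ℤ) := by
      rw [Nat.cast_sum]
      exact Fin.sum_univ_eq_sum_range (fun i => ((i : ℕ) : ℤ)) (N + 1)
    rw [h2]
    exact_mod_cast h1'
  have hTc : ((N * (N + 1) / 2 : ℕ) : ℤ) = ∑ j : Fin (N + 1), ((j : ℕ) : ℤ) := by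
    have hdvd : N * (N + 1) / 2 * 2 = N * (N + 1) :=
      Nat.div_mul_cancel (Nat.even_mul_succ_self N).two_dvd
    have h3 : ((N * (N + 1) / 2 : ℕ) : ℤ) * 2 = ((N : ℤ) * (N + 1)) := by
      exact_mod_cast congrArg (Nat.cast : ℕ → ℤ) hdvd
    linarith [hT2, h3]
  -- a degree-adapted basis
  have hdmem : ∀ i : Fin (N + 1), ∃ p, p ∈ V ∧ p ≠ 0 ∧ p.natDegree = dseq i := by
    intro i
    have hmem : dseq i ∈ {k : ℕ | ∃ g ∈ V, g ≠ 0 ∧ g.natDegree = k} := by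
      rw [hdset]; exact Set.mem_range_self i
    obtain ⟨p, hp1, hp2, hp3⟩ := hmem
    exact ⟨p, hp1, hp2, hp3⟩
  choose g hgV hgne hgdeg using hdmem
  obtain ⟨hWne, hWdeg⟩ := wronsk_high_main g dseq hdmono hgne hgdeg
  have hgli : LinearIndependent ℂ g := linIndep_of_distinct_natDegree hgne hgdeg hdmono
  -- the local multiplicities of the Wronskian
  have key : ∀ ξ : ℂ, ((Polynomial.rootMultiplicity ξ (wronsk (N + 1) g) : ℕ) : ℤ)
      = (∑ i, (ρ ξ i : ℤ)) - ∑ j : Fin (N + 1), ((j : ℕ) : ℤ) := by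
    intro ξ
    have hρmem : ∀ i : Fin (N + 1), ∃ p, p ∈ V ∧ p ≠ 0 ∧
        Polynomial.rootMultiplicity ξ p = ρ ξ i := by
      intro i
      have hmem : ρ ξ i ∈ {k : ℕ | ∃ g ∈ V, g ≠ 0 ∧ Polynomial.rootMultiplicity ξ g = k} := by
        rw [hρset ξ]; exact Set.mem_range_self i
      obtain ⟨p, hp1, hp2, hp3⟩ := hmem
      exact ⟨p, hp1, hp2, hp3⟩
    choose h hhV hhne hhmult using hρmem
    have hfne : ∀ i, Polynomial.taylor ξ (h i) ≠ 0 := by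
      intro i hz
      exact hhne i (Polynomial.taylor_injective ξ (by rw [hz, map_zero]))
    have hftd : ∀ i, (Polynomial.taylor ξ (h i)).natTrailingDegree = ρ ξ i := fun i => by
      rw [← rootMult_eq_taylor_ntd, hhmult]
    obtain ⟨hWfne, hWftd⟩ :=
      wronsk_low_main (fun i => Polynomial.taylor ξ (h i)) (ρ ξ) (hρmono ξ) hfne hftd
    have hwf : wronsk (N + 1) (fun i => Polynomial.taylor ξ (h i))
        = Polynomial.taylor ξ (wronsk (N + 1) h) := wronsk_taylor ξ h
    have hwh_ne : wronsk (N + 1) h ≠ 0 := fun hz => hWfne (by rw [hwf, hz, map_zero])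
    have hmult_wh : ((Polynomial.rootMultiplicity ξ (wronsk (N + 1) h) : ℕ) : ℤ)
        = (∑ i, (ρ ξ i : ℤ)) - ∑ j : Fin (N + 1), ((j : ℕ) : ℤ) := by
      rw [show Polynomial.rootMultiplicity ξ (wronsk (N + 1) h)
          = (Polynomial.taylor ξ (wronsk (N + 1) h)).natTrailingDegree from
          rootMult_eq_taylor_ntd ξ _, ← hwf]
      exact hWftd
    have hcomb : ∀ i, ∃ c : Fin (N + 1) → ℂ, ∑ k, c k • g k = h i :=
      fun i => exists_combination (Nat.succ_pos N) V hrank g hgV hgli (hhV i)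
    choose c hc using hcomb
    have hbc : wronsk (N + 1) h = Polynomial.C ((Matrix.of c).det) * wronsk (N + 1) g := by
      rw [← wronsk_basis_change g c]
      congr 1
      funext i
      rw [hc i]
    have hdet_ne : (Matrix.of c).det ≠ 0 := fun hz =>
      hwh_ne (by rw [hbc, hz, map_zero, zero_mul])
    have heq : Polynomial.rootMultiplicity ξ (wronsk (N + 1) h)
        = Polynomial.rootMultiplicity ξ (wronsk (N + 1) g) := by
      rw [hbc, rootMult_C_mul ξ _ hdet_ne _ hWne]
    rw [← heq]
    exact hmult_wh
  have keyTc : ∀ ξ : ℂ, (∑ i, (ρ ξ i : ℤ)) - ((N * (N + 1) / 2 : ℕ) : ℤ)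
      = ((Polynomial.rootMultiplicity ξ (wronsk (N + 1) g) : ℕ) : ℤ) := fun ξ => by
    rw [key ξ, hTc]
  have hsub : (Function.support fun ξ : ℂ =>
        (∑ i, (ρ ξ i : ℤ)) - ((N * (N + 1) / 2 : ℕ) : ℤ))
      ⊆ ((wronsk (N + 1) g).roots.toFinset : Set ℂ) := by
    intro ξ hξ
    rw [Function.mem_support, keyTc ξ] at hξ
    have hmne : Polynomial.rootMultiplicity ξ (wronsk (N + 1) g) ≠ 0 := fun hz => hξ (by rw [hz]; simp)
    have hroot : Polynomial.IsRoot (wronsk (N + 1) g) ξ := by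
      by_contra hnr
      exact hmne (Polynomial.rootMultiplicity_eq_zero hnr)
    simp only [Finset.coe_sort_coe, Finset.mem_coe, Multiset.mem_toFinset]
    rw [Polynomial.mem_roots hWne]
    exact hroot
  constructor
  · exact Set.Finite.subset ((wronsk (N + 1) g).roots.toFinset).finite_toSet hsub
  · have hfin : (∑ᶠ ξ : ℂ, ((∑ i, (ρ ξ i : ℤ)) - ((N * (N + 1) / 2 : ℕ) : ℤ)))
        = ∑ ξ ∈ (wronsk (N + 1) g).roots.toFinset,
            ((∑ i, (ρ ξ i : ℤ)) - ((N * (N + 1) / 2 : ℕ) : ℤ)) :=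
      finsum_eq_sum_of_support_subset _ hsub
    have h4 : ∑ ξ ∈ (wronsk (N + 1) g).roots.toFinset,
        Polynomial.rootMultiplicity ξ (wronsk (N + 1) g)
        = Multiset.card (wronsk (N + 1) g).roots := by
      rw [← Multiset.toFinset_sum_count_eq]
      exact Finset.sum_congr rfl fun ξ _ => (Polynomial.count_roots _).symm
    have h5 : Multiset.card (wronsk (N + 1) g).roots = (wronsk (N + 1) g).natDegree :=
      Polynomial.splits_iff_card_roots.mp (IsAlgClosed.splits _)
    have hsum : (∑ᶠ ξ : ℂ, ((∑ i, (ρ ξ i : ℤ)) - ((N * (N + 1) / 2 : ℕ) : ℤ)))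
        = ((wronsk (N + 1) g).natDegree : ℤ) := by
      rw [hfin, Finset.sum_congr rfl (fun ξ _ => keyTc ξ), ← Nat.cast_sum, h4, h5]
    rw [hsum, hWdeg, ← hTc]
    have h6 : ((N * (N + 1) / 2 : ℕ) : ℤ) * 2 = ((N : ℤ) + 1) * N := by
      rw [hTc]; exact hT2
    linarith
end
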